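/- Let g, h be Leibniz algebras. If two non-abelian 2-cocycles (l¹,r¹,ω¹) and (l²,r²,ω²) on g with values in h are equivalent via a linear map φ : g → h, then the corresponding Leibniz algebra extensions (g⊕h, [·,·]_{(l¹,r¹,ω¹)}) and (g⊕h, [·,·]_{(l²,r²,ω²)}) are isomorphic via θ(x+α) = x − φ(x) + α, a Leibniz algebra isomorphism commuting with the inclusions of h and projections to g. -/
import Mathlib


variable {K : Type*} [Field K]
  {g : Type*} [AddCommGroup g] [Module K g]
  {h : Type*} [AddCommGroup h] [Module K h]

/-- The extension bracket on `g ⊕ h` determined by `(l, r, ω)`. -/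
def extBracket (Bg : g →ₗ[K] g →ₗ[K] g) (Bh : h →ₗ[K] h →ₗ[K] h)
    (l r : g →ₗ[K] Module.End K h) (ω : g →ₗ[K] g →ₗ[K] h)
    (u v : g × h) : g × h :=
  (Bg u.1 v.1, ω u.1 v.1 + l u.1 v.2 + r v.1 u.2 + Bh u.2 v.2)

/-- If two non-abelian 2-cocycles `(l¹,r¹,ω¹)` and `(l²,r²,ω²)` are
equivalent via `φ : g → h`, then the corresponding extensions are isomorphic
via `θ(x+α) = x - φ(x) + α`: `θ` is a bijective Leibniz algebra morphism from
`(g⊕h, [·,·]_{(l²,r²,ω²)})` to `(g⊕h, [·,·]_{(l¹,r¹,ω¹)})` fixing `h`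
pointwise and commuting with the projections to `g`. -/
theorem equivalent_cocycles_isomorphic_extensions
    (Bg : g →ₗ[K] g →ₗ[K] g)
    (hg : ∀ x y z : g, Bg x (Bg y z) = Bg (Bg x y) z + Bg y (Bg x z))
    (Bh : h →ₗ[K] h →ₗ[K] h)
    (hh : ∀ a b c : h, Bh a (Bh b c) = Bh (Bh a b) c + Bh b (Bh a c))
    (l₁ r₁ l₂ r₂ : g →ₗ[K] Module.End K h) (ω₁ ω₂ : g →ₗ[K] g →ₗ[K] h)
    -- both brackets are Leibniz brackets (i.e. the triples are 2-cocycles)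
    (hext₁ : ∀ u v w : g × h,
        extBracket Bg Bh l₁ r₁ ω₁ u (extBracket Bg Bh l₁ r₁ ω₁ v w) =
          extBracket Bg Bh l₁ r₁ ω₁ (extBracket Bg Bh l₁ r₁ ω₁ u v) w +
            extBracket Bg Bh l₁ r₁ ω₁ v (extBracket Bg Bh l₁ r₁ ω₁ u w))
    (hext₂ : ∀ u v w : g × h,
        extBracket Bg Bh l₂ r₂ ω₂ u (extBracket Bg Bh l₂ r₂ ω₂ v w) =
          extBracket Bg Bh l₂ r₂ ω₂ (extBracket Bg Bh l₂ r₂ ω₂ u v) w +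
            extBracket Bg Bh l₂ r₂ ω₂ v (extBracket Bg Bh l₂ r₂ ω₂ u w))
    -- equivalence of the two cocycles via φ
    (φ : g →ₗ[K] h)
    (hl : ∀ (x : g) (α : h), l₁ x α - l₂ x α = Bh (φ x) α)
    (hr : ∀ (x : g) (α : h), r₁ x α - r₂ x α = Bh α (φ x))
    (hω : ∀ x y : g, ω₁ x y - ω₂ x y =
        l₂ x (φ y) + r₂ y (φ x) + Bh (φ x) (φ y) - φ (Bg x y)) :
    Function.Bijective (fun u : g × h => (u.1, u.2 - φ u.1)) ∧
    (∀ u v : g × h,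
        (fun u : g × h => (u.1, u.2 - φ u.1)) (extBracket Bg Bh l₂ r₂ ω₂ u v) =
          extBracket Bg Bh l₁ r₁ ω₁
            ((fun u : g × h => (u.1, u.2 - φ u.1)) u)
            ((fun u : g × h => (u.1, u.2 - φ u.1)) v)) ∧
    (∀ α : h, (fun u : g × h => (u.1, u.2 - φ u.1)) ((0 : g), α) = (0, α)) ∧
    (∀ u : g × h, ((fun u : g × h => (u.1, u.2 - φ u.1)) u).1 = u.1) := by
  refine ⟨?_, ?_, ?_, ?_⟩
  · exact Function.bijective_iff_has_inverse.mpr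
      ⟨fun u => (u.1, u.2 + φ u.1), fun u => by simp, fun u => by simp⟩
  · rintro ⟨x, α⟩ ⟨y, β⟩
    have hl' : ∀ (x : g) (a : h), l₁ x a = l₂ x a + Bh (φ x) a := fun x a => by
      have := hl x a; linear_combination (norm := abel) this
    have hr' : ∀ (x : g) (a : h), r₁ x a = r₂ x a + Bh a (φ x) := fun x a => by
      have := hr x a; linear_combination (norm := abel) this
    have hω' : ∀ x y : g, ω₁ x y =
        ω₂ x y + (l₂ x (φ y) + r₂ y (φ x) + Bh (φ x) (φ y) - φ (Bg x y)) :=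
      fun x y => by have := hω x y; linear_combination (norm := abel) this
    simp only [extBracket, Prod.mk.injEq]
    refine ⟨trivial, ?_⟩
    simp only [hl', hr', hω', map_sub, map_add, LinearMap.add_apply, LinearMap.sub_apply, LinearMap.neg_apply]
    abel
  · intro α; simp
  · intro u; rfl
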